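/- Let R₁, R₂ ⊆ ℝ² be disjoint convex sets, let p₁ ∈ R₁ and p₂ ∈ R₂, let u ∈ ℝ², and let t₁, t₂ ≥ 0 be real numbers. Then it cannot happen that both p₁ + t₁·u ∈ R₂ and p₂ + t₂·u ∈ R₁. In other words, two disjoint convex sets in the plane cannot each contain a point of a forward ray, in the same direction u, emanating from a point of the other. -/

import Mathlib

/-- Two disjoint convex sets in the plane cannot each contain a point of a forward ray,
in the same direction `u`, emanating from a point of the other. -/
theorem disjoint_convex_no_mutual_forward_rays
    (R₁ R₂ : Set (EuclideanSpace ℝ (Fin 2)))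
    (hconv₁ : Convex ℝ R₁) (hconv₂ : Convex ℝ R₂) (hdisj : Disjoint R₁ R₂)
    (p₁ p₂ u : EuclideanSpace ℝ (Fin 2)) (hp₁ : p₁ ∈ R₁) (hp₂ : p₂ ∈ R₂)
    (t₁ t₂ : ℝ) (ht₁ : 0 ≤ t₁) (ht₂ : 0 ≤ t₂) :
    ¬ (p₁ + t₁ • u ∈ R₂ ∧ p₂ + t₂ • u ∈ R₁) := by
  rintro ⟨hq₁, hq₂⟩
  rcases eq_or_lt_of_le (add_nonneg ht₁ ht₂) with h | h
  · have h1 : t₁ = 0 := by linarith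
    have : p₁ ∈ R₂ := by simpa [h1] using hq₁
    exact (Set.disjoint_left.mp hdisj hp₁) this
  · set s : ℝ := t₁ / (t₁ + t₂) with hs
    set r : ℝ := t₂ / (t₁ + t₂) with hr
    have hsr : s + r = 1 := by rw [hs, hr, ← add_div, div_self h.ne']
    have hs0 : 0 ≤ s := div_nonneg ht₁ h.le
    have hr0 : 0 ≤ r := div_nonneg ht₂ h.le
    have hx1 : r • p₁ + s • (p₂ + t₂ • u) ∈ R₁ :=
      hconv₁ hp₁ hq₂ hr0 hs0 (by linarith)
    have hx2 : s • p₂ + r • (p₁ + t₁ • u) ∈ R₂ :=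
      hconv₂ hp₂ hq₁ hs0 hr0 hsr
    have hst : s * t₂ = r * t₁ := by rw [hs, hr]; ring
    have heq : r • p₁ + s • (p₂ + t₂ • u) = s • p₂ + r • (p₁ + t₁ • u) := by
      rw [smul_add, smul_add, smul_smul, smul_smul, hst]
      module
    exact (Set.disjoint_left.mp hdisj hx1) (heq ▸ hx2)
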